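/- Let M be a complete metric space, let N be a closed subset of M, let D be a dense subset of M and let S be a dense subset of N with S ⊆ D. If S is a local retract of D (with the induced metric), then N is a local retract of M. -/

import Mathlib

/-- A subset `N` of a metric space `M` is a local retract of `M` if for every finite
subset `E` of `M` and every `ε > 0` there exists a `(1+ε)`-Lipschitz map `r : E → N`
fixing every point of `E ∩ N`. -/
def IsLocalRetract {M : Type*} [MetricSpace M] (N : Set M) : Prop :=
  ∀ E : Finset M, ∀ ε : ℝ, 0 < ε →
    ∃ r : M → M, (∀ x ∈ E, r x ∈ N) ∧ (∀ e ∈ E, e ∈ N → r e = e) ∧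
      ∀ x ∈ E, ∀ y ∈ E, dist (r x) (r y) ≤ (1 + ε) * dist x y

theorem stmt14 {M : Type*} [MetricSpace M] [CompleteSpace M]
    (N : Set M) (hNc : IsClosed N) (D : Set M) (hD : Dense D)
    (S : Set M) (hSD : S ⊆ D) (hSN : S ⊆ N) (hSdense : N ⊆ closure S)
    (hS : IsLocalRetract (Subtype.val ⁻¹' S : Set ↥D)) :
    IsLocalRetract N := by
  classical
  intro E ε hε
  -- choose δ small compared to the minimal positive distance in E
  obtain ⟨δ, hδ0, hδ⟩ : ∃ δ : ℝ, 0 < δ ∧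
      ∀ x ∈ E, ∀ y ∈ E, x ≠ y → (3 + ε) * δ ≤ (ε / 2) * dist x y := by
    set P := (E ×ˢ E).filter (fun p => p.1 ≠ p.2) with hP
    by_cases hPne : P.Nonempty
    · set m := P.inf' hPne (fun p => dist p.1 p.2) with hm
      have hm0 : 0 < m := by
        rw [hm, Finset.lt_inf'_iff]
        intro p hp
        exact dist_pos.mpr (Finset.mem_filter.mp hp).2
      have h3 : (0:ℝ) < 3 + ε := by linarith
      refine ⟨(ε / 2) * m / (3 + ε), by positivity, ?_⟩
      intro x hx y hy hxy
      have hmem : (x, y) ∈ P :=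
        Finset.mem_filter.mpr ⟨Finset.mem_product.mpr ⟨hx, hy⟩, hxy⟩
      have hle : m ≤ dist x y := Finset.inf'_le _ hmem
      have heq : (3 + ε) * ((ε / 2) * m / (3 + ε)) = (ε / 2) * m := by
        field_simp
      rw [heq]
      nlinarith
    · refine ⟨1, one_pos, fun x hx y hy hxy => ?_⟩
      have hmem : (x, y) ∈ P :=
        Finset.mem_filter.mpr ⟨Finset.mem_product.mpr ⟨hx, hy⟩, hxy⟩
      rw [Finset.not_nonempty_iff_eq_empty.mp hPne] at hmem
      exact absurd hmem (Finset.notMem_empty _)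
  -- choose approximating points in D (in S for points of N)
  have hg : ∀ x : M, ∃ d : D, dist x (d : M) < δ ∧ (x ∈ N → (d : M) ∈ S) := by
    intro x
    by_cases hxN : x ∈ N
    · obtain ⟨s, hsS, hds⟩ := Metric.mem_closure_iff.mp (hSdense hxN) δ hδ0
      exact ⟨⟨s, hSD hsS⟩, hds, fun _ => hsS⟩
    · obtain ⟨d, hdD, hdd⟩ := Metric.mem_closure_iff.mp (hD x) δ hδ0
      exact ⟨⟨d, hdD⟩, hdd, fun h => absurd h hxN⟩
  choose g hg1 hg2 using hg
  -- apply the local retract property of S in D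
  obtain ⟨r', hr'S, hr'fix, hr'lip⟩ := hS (E.image g) (ε / 2) (half_pos hε)
  refine ⟨fun x => if x ∈ N then x else ↑(r' (g x)), ?_, ?_, ?_⟩
  · intro x hx
    by_cases hxN : x ∈ N
    · simp [hxN]
    · simp only [hxN, if_false]
      exact hSN (hr'S (g x) (Finset.mem_image_of_mem g hx))
  · intro e _ heN
    simp [heN]
  · intro x hx y hy
    by_cases hxy : x = y
    · subst hxy
      simp only [dist_self]
      positivity
    have hkey := hδ x hx y hy hxy
    have hgx : g x ∈ E.image g := Finset.mem_image_of_mem g hx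
    have hgy : g y ∈ E.image g := Finset.mem_image_of_mem g hy
    have hlip : dist (↑(r' (g x)) : M) (↑(r' (g y)) : M) ≤
        (1 + ε / 2) * dist ((g x : M)) ((g y : M)) := by
      have := hr'lip (g x) hgx (g y) hgy
      rwa [Subtype.dist_eq, Subtype.dist_eq] at this
    have hdx : dist x ((g x : M)) < δ := hg1 x
    have hdy : dist y ((g y : M)) < δ := hg1 y
    have htri : dist ((g x : M)) ((g y : M)) ≤ dist x y + 2 * δ := by
      have h1 : dist ((g x : M)) ((g y : M)) ≤
          dist ((g x : M)) x + dist x y + dist y ((g y : M)) := dist_triangle4 _ _ _ _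
      have h2 : dist ((g x : M)) x = dist x ((g x : M)) := dist_comm _ _
      linarith
    by_cases hxN : x ∈ N <;> by_cases hyN : y ∈ N
    · simp only [hxN, hyN, if_true]
      nlinarith [dist_nonneg (x := x) (y := y)]
    · simp only [hxN, hyN, if_true, if_false]
      have hfix : r' (g x) = g x := hr'fix (g x) hgx (hg2 x hxN)
      have h1 : dist x (↑(r' (g y)) : M) ≤
          dist x (↑(r' (g x)) : M) + dist (↑(r' (g x)) : M) (↑(r' (g y)) : M) :=
        dist_triangle _ _ _
      have h3 : dist x (↑(r' (g x)) : M) = dist x ((g x : M)) := by rw [hfix]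
      nlinarith [dist_nonneg (x := x) (y := y)]
    · simp only [hxN, hyN, if_true, if_false]
      have hfix : r' (g y) = g y := hr'fix (g y) hgy (hg2 y hyN)
      have h1 : dist (↑(r' (g x)) : M) y ≤
          dist (↑(r' (g x)) : M) (↑(r' (g y)) : M) + dist (↑(r' (g y)) : M) y :=
        dist_triangle _ _ _
      have h3 : dist (↑(r' (g y)) : M) y = dist y ((g y : M)) := by
        rw [hfix, dist_comm]
      nlinarith [dist_nonneg (x := x) (y := y)]
    · simp only [hxN, hyN, if_false]
      nlinarith [dist_nonneg (x := x) (y := y)]
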